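/- For a bad permutation σ (one with σ∘σ ≠ id) of {1,...,n}, the cycle-reversal operation D — which reverses the unique cycle of length > 2 through the least i with σ(σ(i)) ≠ i — satisfies D(D(σ)) = σ and D(σ) ≠ σ, and thus pairs up the bad permutations into 2-element orbits; in particular the number of bad permutations of {1,...,n} is even. -/

import Mathlib

open scoped Classical

/-- The cycle-reversal operation `D`: for a bad permutation `σ` (one with
`σ ∘ σ ≠ id`), let `i` be the least point with `σ (σ i) ≠ i`; `D σ` agrees
with `σ` off the cycle of `i` and reverses (inverts) the cycle through `i`,
which has length `> 2`.  (Multiplying by `(σ.cycleOf i)⁻¹` twice replaces the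
cycle of `i` in `σ` by its reversal and leaves the rest of `σ` unchanged.)
Good permutations are left fixed. -/
noncomputable def cycleReversal {n : ℕ} (σ : Equiv.Perm (Fin n)) :
    Equiv.Perm (Fin n) :=
  if h : σ * σ ≠ 1 then
    (σ.cycleOf ((Finset.univ.filter fun i => σ (σ i) ≠ i).min' (by
        rw [Ne, Equiv.ext_iff] at h
        push_neg at h
        obtain ⟨i, hi⟩ := h
        exact ⟨i, Finset.mem_filter.mpr ⟨Finset.mem_univ _,
          by simpa [Equiv.Perm.mul_apply] using hi⟩⟩)))⁻¹
      * (σ.cycleOf ((Finset.univ.filter fun i => σ (σ i) ≠ i).min' (by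
        rw [Ne, Equiv.ext_iff] at h
        push_neg at h
        obtain ⟨i, hi⟩ := h
        exact ⟨i, Finset.mem_filter.mpr ⟨Finset.mem_univ _,
          by simpa [Equiv.Perm.mul_apply] using hi⟩⟩)))⁻¹
      * σ
  else σ

namespace CRaux

open Equiv Equiv.Perm Finset

variable {n : ℕ}

lemma perm_inv_apply_self {α : Type*} (f : Equiv.Perm α) (x : α) : f⁻¹ (f x) = x :=
  f.symm_apply_apply x

noncomputable def badPts (σ : Equiv.Perm (Fin n)) : Finset (Fin n) :=
  Finset.univ.filter fun i => σ (σ i) ≠ i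

lemma badPts_nonempty {σ : Equiv.Perm (Fin n)} (h : σ * σ ≠ 1) :
    (badPts σ).Nonempty := by
  rw [Ne, Equiv.ext_iff] at h
  push_neg at h
  obtain ⟨i, hi⟩ := h
  exact ⟨i, Finset.mem_filter.mpr ⟨Finset.mem_univ _,
    by simpa [Equiv.Perm.mul_apply] using hi⟩⟩

section

variable {σ : Equiv.Perm (Fin n)} (h : σ * σ ≠ 1)
include h

noncomputable def mpt (σ : Equiv.Perm (Fin n)) (h : σ * σ ≠ 1) : Fin n :=
  (badPts σ).min' (badPts_nonempty h)

lemma cycleReversal_eq :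
    cycleReversal σ = (σ.cycleOf (mpt σ h))⁻¹ * (σ.cycleOf (mpt σ h))⁻¹ * σ := by
  rw [cycleReversal, dif_pos h]
  rfl

lemma mpt_bad : σ (σ (mpt σ h)) ≠ mpt σ h := by
  have := (badPts σ).min'_mem (badPts_nonempty h)
  simpa [badPts, mpt] using this

lemma D_apply (x : Fin n) :
    cycleReversal σ x = if σ.SameCycle (mpt σ h) x then σ⁻¹ x else σ x := by
  rw [cycleReversal_eq h]
  simp only [Equiv.Perm.mul_apply, Equiv.Perm.cycleOf_inv,
    Equiv.Perm.cycleOf_apply, Equiv.Perm.sameCycle_inv]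
  by_cases hx : σ.SameCycle (mpt σ h) x
  · have hσx : σ.SameCycle (mpt σ h) (σ x) := hx.apply_right
    rw [if_pos hσx, CRaux.perm_inv_apply_self, if_pos hx, if_pos hx]
  · have hσx : ¬ σ.SameCycle (mpt σ h) (σ x) := fun hc => hx hc.of_apply_right
    rw [if_neg hσx, if_neg hσx, if_neg hx]

lemma D_zpow (k : ℤ) : (cycleReversal σ ^ k) (mpt σ h) = (σ ^ (-k)) (mpt σ h) := by
  induction k using Int.induction_on with
  | zero => simp
  | succ k ih =>
      have hsc : σ.SameCycle (mpt σ h) ((σ ^ (-(k:ℤ))) (mpt σ h)) := ⟨-(k:ℤ), rfl⟩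
      have : (cycleReversal σ ^ ((k:ℤ) + 1)) (mpt σ h)
          = cycleReversal σ ((σ ^ (-(k:ℤ))) (mpt σ h)) := by
        rw [add_comm, zpow_add, zpow_one, Equiv.Perm.mul_apply, ih]
      rw [this, D_apply h, if_pos hsc, ← Equiv.Perm.mul_apply, ← zpow_neg_one,
        ← zpow_add]
      ring_nf
  | pred k ih =>
      have hsc : σ.SameCycle (mpt σ h) ((σ ^ ((k:ℤ) + 1)) (mpt σ h)) := ⟨(k:ℤ)+1, rfl⟩
      have key : cycleReversal σ ((σ ^ ((k:ℤ) + 1)) (mpt σ h)) = (σ ^ (k:ℤ)) (mpt σ h) := by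
        rw [D_apply h, if_pos hsc, ← Equiv.Perm.mul_apply, ← zpow_neg_one, ← zpow_add]
        ring_nf
      have : (cycleReversal σ ^ (-(k:ℤ) - 1)) (mpt σ h)
          = (cycleReversal σ)⁻¹ ((cycleReversal σ ^ (-(k:ℤ))) (mpt σ h)) := by
        rw [sub_eq_add_neg, add_comm, zpow_add, zpow_neg_one, Equiv.Perm.mul_apply]
      rw [this, ih]
      simp only [neg_neg]
      rw [← key, CRaux.perm_inv_apply_self]
      congr 1
      ring

lemma D_sameCycle (x : Fin n) :
    (cycleReversal σ).SameCycle (mpt σ h) x ↔ σ.SameCycle (mpt σ h) x := by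
  constructor
  · rintro ⟨k, rfl⟩
    exact ⟨-k, (D_zpow h k).symm⟩
  · rintro ⟨k, rfl⟩
    exact ⟨-k, by rw [D_zpow h (-k), neg_neg]⟩

lemma D_cycleOf :
    (cycleReversal σ).cycleOf (mpt σ h) = (σ.cycleOf (mpt σ h))⁻¹ := by
  ext x
  by_cases hx : σ.SameCycle (mpt σ h) x
  · rw [Equiv.Perm.cycleOf_apply, if_pos ((D_sameCycle h x).mpr hx),
      Equiv.Perm.cycleOf_inv, Equiv.Perm.cycleOf_apply,
      if_pos (Equiv.Perm.sameCycle_inv.mpr hx), D_apply h, if_pos hx]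
  · rw [Equiv.Perm.cycleOf_apply, if_neg (fun hc => hx ((D_sameCycle h x).mp hc)),
      Equiv.Perm.cycleOf_inv, Equiv.Perm.cycleOf_apply,
      if_neg (fun hc => hx (Equiv.Perm.sameCycle_inv.mp hc))]

lemma D_sq_apply (x : Fin n) :
    cycleReversal σ (cycleReversal σ x)
      = if σ.SameCycle (mpt σ h) x then σ⁻¹ (σ⁻¹ x) else σ (σ x) := by
  by_cases hx : σ.SameCycle (mpt σ h) x
  · have h1 : σ.SameCycle (mpt σ h) (σ⁻¹ x) := by simpa using hx
    rw [D_apply h x, if_pos hx, D_apply h (σ⁻¹ x), if_pos h1, if_pos hx]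
  · have h1 : ¬ σ.SameCycle (mpt σ h) (σ x) := fun hc => hx hc.of_apply_right
    rw [D_apply h x, if_neg hx, D_apply h (σ x), if_neg h1, if_neg hx]

lemma badPts_D : badPts (cycleReversal σ) = badPts σ := by
  ext x
  simp only [badPts, Finset.mem_filter, Finset.mem_univ, true_and]
  rw [D_sq_apply h]
  by_cases hx : σ.SameCycle (mpt σ h) x
  · rw [if_pos hx]
    have key : σ⁻¹ (σ⁻¹ x) = x ↔ σ (σ x) = x := by
      constructor
      · intro he
        have := congrArg (fun y => σ (σ y)) he
        simpa using this.symm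
      · intro he
        have := congrArg (fun y => σ⁻¹ (σ⁻¹ y)) he
        simpa using this.symm
    exact not_congr key
  · rw [if_neg hx]

lemma D_bad : cycleReversal σ * cycleReversal σ ≠ 1 := by
  intro hc
  have h1 : cycleReversal σ (cycleReversal σ (mpt σ h)) = mpt σ h := by
    rw [← Equiv.Perm.mul_apply, hc]; rfl
  rw [D_sq_apply h, if_pos (Equiv.Perm.SameCycle.refl σ (mpt σ h))] at h1
  apply mpt_bad h
  have := congrArg (fun y => σ (σ y)) h1
  simpa using this.symm

lemma mpt_D : mpt (cycleReversal σ) (D_bad h) = mpt σ h := by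
  unfold mpt
  congr 1
  exact badPts_D h

lemma D_D : cycleReversal (cycleReversal σ) = σ := by
  rw [cycleReversal_eq (D_bad h), mpt_D h, D_cycleOf h]
  rw [cycleReversal_eq h]
  group

lemma D_ne : cycleReversal σ ≠ σ := by
  intro hc
  have h1 : cycleReversal σ (mpt σ h) = σ⁻¹ (mpt σ h) := by
    rw [D_apply h, if_pos (Equiv.Perm.SameCycle.refl σ (mpt σ h))]
  rw [hc] at h1
  apply mpt_bad h
  rw [h1]
  simp

end

/-- fixed-point-free involutions on a finset give even cardinality -/
lemma even_card_of_invol {α : Type*} [DecidableEq α] (s : Finset α) (f : α → α)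
    (hmem : ∀ a ∈ s, f a ∈ s) (hinv : ∀ a ∈ s, f (f a) = a)
    (hne : ∀ a ∈ s, f a ≠ a) : Even s.card := by
  induction s using Finset.strongInduction with
  | _ s ih =>
    rcases s.eq_empty_or_nonempty with rfl | ⟨a, ha⟩
    · simp
    · have hfa : f a ∈ s := hmem a ha
      have hfane : f a ≠ a := hne a ha
      have hsub : ({a, f a} : Finset α) ⊆ s := by
        intro x hx
        rcases Finset.mem_insert.mp hx with rfl | hx
        · exact ha
        · rw [Finset.mem_singleton.mp hx]; exact hfa
      have hpair : ({a, f a} : Finset α).card = 2 := by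
        rw [Finset.card_insert_of_notMem (by simpa using hfane.symm),
          Finset.card_singleton]
      have htss : s \ {a, f a} ⊂ s :=
        Finset.sdiff_ssubset hsub ⟨a, Finset.mem_insert_self _ _⟩
      have hmem' : ∀ b ∈ s \ {a, f a}, f b ∈ s \ {a, f a} := by
        intro b hb
        rw [Finset.mem_sdiff] at hb ⊢
        obtain ⟨hbs, hbn⟩ := hb
        refine ⟨hmem b hbs, fun hc => hbn ?_⟩
        rcases Finset.mem_insert.mp hc with hc | hc
        · have hb2 : b = f a := (hinv b hbs).symm.trans (congrArg f hc)
          rw [hb2]; exact Finset.mem_insert_of_mem (Finset.mem_singleton_self _)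
        · have hb2 : b = a := by
            have h2 := congrArg f (Finset.mem_singleton.mp hc)
            rwa [hinv b hbs, hinv a ha] at h2
          rw [hb2]; exact Finset.mem_insert_self _ _
      have hle : 2 ≤ s.card := hpair ▸ Finset.card_le_card hsub
      have hcard : s.card = (s \ {a, f a}).card + 2 := by
        rw [Finset.card_sdiff_of_subset hsub, hpair]
        omega
      have hev := ih _ htss (fun b hb => hmem' b hb)
        (fun b hb => hinv b (Finset.mem_sdiff.mp hb).1)
        (fun b hb => hne b (Finset.mem_sdiff.mp hb).1)
      rw [hcard]
      exact hev.add even_two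

end CRaux
/-- For every bad permutation `σ` (i.e. `σ ∘ σ ≠ id`) of `{1,…,n}`, the
cycle-reversal operation satisfies `D (D σ) = σ` and `D σ ≠ σ`, so it pairs up
the bad permutations into 2-element orbits; in particular the number of bad
permutations of `{1,…,n}` is even. -/
theorem cycleReversal_pairs_bad_permutations (n : ℕ) :
    (∀ σ : Equiv.Perm (Fin n), σ * σ ≠ 1 →
      cycleReversal (cycleReversal σ) = σ ∧ cycleReversal σ ≠ σ) ∧
    Even ((Finset.univ.filter fun σ : Equiv.Perm (Fin n) => σ * σ ≠ 1).card) := by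
  constructor
  · intro σ h
    exact ⟨CRaux.D_D h, CRaux.D_ne h⟩
  · apply CRaux.even_card_of_invol _ cycleReversal
    · intro σ hσ
      simp only [Finset.mem_filter, Finset.mem_univ, true_and] at hσ ⊢
      exact CRaux.D_bad hσ
    · intro σ hσ
      simp only [Finset.mem_filter, Finset.mem_univ, true_and] at hσ
      exact CRaux.D_D hσ
    · intro σ hσ
      simp only [Finset.mem_filter, Finset.mem_univ, true_and] at hσ
      exact CRaux.D_ne hσ
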